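/- Let F ⊆ P([n]) be an increasing family. Then the function p ↦ log_p(μ_p(F)) = log(μ_p(F)) / log(p) is monotone non-increasing on (0,1). -/

import Mathlib

open Finset

noncomputable def biasedMeasure (p : ℝ) (n : ℕ) (F : Finset (Finset (Fin n))) : ℝ :=
  ∑ A ∈ F, p ^ A.card * (1 - p) ^ (n - A.card)

set_option linter.unusedSectionVars false
set_option linter.unusedVariables false

namespace LogBiasedAux

variable {α : Type*} [DecidableEq α]

noncomputable def mu (U : Finset α) (F : Finset (Finset α)) (p : ℝ) : ℝ :=
  ∑ A ∈ F, p ^ A.card * (1 - p) ^ (U.card - A.card)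

lemma mu_differentiable (U : Finset α) (F : Finset (Finset α)) :
    Differentiable ℝ (mu U F) := by
  have : ∀ A ∈ F, Differentiable ℝ (fun p : ℝ => p ^ A.card * (1 - p) ^ (U.card - A.card)) := by
    intro A _
    exact (differentiable_pow _).mul (((differentiable_const (1:ℝ)).sub differentiable_id).pow _)
  exact Differentiable.fun_sum this

lemma mu_nonneg (U : Finset α) (F : Finset (Finset α)) {p : ℝ} (hp0 : 0 ≤ p) (hp1 : p ≤ 1) :
    0 ≤ mu U F p := by
  apply Finset.sum_nonneg
  intro A _
  have h1 : (0:ℝ) ≤ 1 - p := by linarith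
  positivity

lemma mu_mono (U : Finset α) {F G : Finset (Finset α)} (h : F ⊆ G) {p : ℝ}
    (hp0 : 0 ≤ p) (hp1 : p ≤ 1) : mu U F p ≤ mu U G p := by
  apply Finset.sum_le_sum_of_subset_of_nonneg h
  intro A _ _
  have h1 : (0:ℝ) ≤ 1 - p := by linarith
  positivity

lemma mu_powerset (U : Finset α) (p : ℝ) : mu U U.powerset p = 1 := by
  have h := Finset.prod_add (fun _ : α => p) (fun _ : α => 1 - p) U
  simp only [Finset.prod_const, add_sub_cancel, one_pow, Finset.prod_const_one] at h
  replace h := h.symm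
  rw [mu]
  refine Eq.trans (Finset.sum_congr rfl fun t ht => ?_) h
  rw [Finset.card_sdiff_of_subset (Finset.mem_powerset.mp ht)]

lemma mu_le_one (U : Finset α) {F : Finset (Finset α)} (hF : F ⊆ U.powerset) {p : ℝ}
    (hp0 : 0 ≤ p) (hp1 : p ≤ 1) : mu U F p ≤ 1 :=
  (mu_mono U hF hp0 hp1).trans (le_of_eq (mu_powerset U p))


lemma mu_insert {a : α} {s : Finset α} (ha : a ∉ s) {F : Finset (Finset α)}
    (hF : F ⊆ (insert a s).powerset) (p : ℝ) :
    mu (insert a s) F p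
      = (1 - p) * mu s (F.filter fun A => a ∉ A) p
        + p * mu s ((F.filter fun A => a ∈ A).image fun A => A.erase a) p := by
  rw [mu, ← Finset.sum_filter_add_sum_filter_not F (fun A => a ∈ A), add_comm]
  congr 1
  · -- a ∉ A part
    rw [mu, Finset.mul_sum]
    apply Finset.sum_congr rfl
    intro A hA
    simp only [Finset.mem_filter] at hA
    have hAs : A ⊆ s :=
      (Finset.subset_insert_iff_of_notMem hA.2).mp (Finset.mem_powerset.mp (hF hA.1))
    have hcard : A.card ≤ s.card := Finset.card_le_card hAs
    rw [Finset.card_insert_of_notMem ha,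
      show s.card + 1 - A.card = (s.card - A.card) + 1 from by omega, pow_succ]
    ring
  · -- a ∈ A part
    have hinj : ∀ A ∈ F.filter (fun A => a ∈ A), ∀ B ∈ F.filter (fun A => a ∈ A),
        A.erase a = B.erase a → A = B := by
      intro A hA B hB h
      simp only [Finset.mem_filter] at hA hB
      rw [← Finset.insert_erase hA.2, h, Finset.insert_erase hB.2]
    rw [mu, Finset.sum_image hinj, Finset.mul_sum]
    apply Finset.sum_congr rfl
    intro A hA
    simp only [Finset.mem_filter] at hA
    have haA : a ∈ A := hA.2
    have hsub : A ⊆ insert a s := Finset.mem_powerset.mp (hF hA.1)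
    have hc1 : 1 ≤ A.card := Finset.card_pos.mpr ⟨a, haA⟩
    have hc2 : A.card ≤ s.card + 1 := by
      have := Finset.card_le_card hsub
      rwa [Finset.card_insert_of_notMem ha] at this
    rw [Finset.card_erase_of_mem haA, Finset.card_insert_of_notMem ha,
      show s.card - (A.card - 1) = s.card + 1 - A.card from by omega,
      show A.card = (A.card - 1) + 1 from by omega]
    rw [pow_succ, show A.card - 1 + 1 - 1 = A.card - 1 from by omega]
    ring

lemma deriv_combo (g h : ℝ → ℝ) (hg : Differentiable ℝ g) (hh : Differentiable ℝ h) (p : ℝ) :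
    deriv (fun x => (1-x) * g x + x * h x) p
      = ((1-p) * deriv g p - g p) + (p * deriv h p + h p) := by
  have Hg := (hg p).hasDerivAt
  have Hh := (hh p).hasDerivAt
  have H1 : HasDerivAt (fun x : ℝ => (1-x) * g x) ((0-1) * g p + (1-p) * deriv g p) p :=
    ((hasDerivAt_const p (1:ℝ)).sub (hasDerivAt_id p)).mul Hg
  have H2 : HasDerivAt (fun x : ℝ => x * h x) (1 * h p + p * deriv h p) p :=
    (hasDerivAt_id p).mul Hh
  rw [(H1.fun_add H2).deriv]
  ring


lemma lemmaR {p a b : ℝ} (hp0 : 0 < p) (hp1 : p < 1) (ha : 0 ≤ a) (hab : a ≤ b) :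
    -(((1-p)*a + p*b) * Real.log ((1-p)*a + p*b)) ≤
      (1-p) * (-(a * Real.log a)) + p * (-(b * Real.log b)) + p * (-Real.log p) * (b - a) := by
  rcases eq_or_lt_of_le (ha.trans hab) with hb | hb
  · -- b = 0, hence a = 0
    have hb0 : b = 0 := hb.symm
    have ha0 : a = 0 := le_antisymm (hab.trans_eq hb0) ha
    simp [ha0, hb0]
  -- 0 < b
  set φ : ℝ → ℝ := fun x => -(x * Real.log x) with hφ
  set D : ℝ → ℝ := fun x =>
    (1-p) * φ x + p * φ b + p * (-Real.log p) * (b - x) - φ ((1-p)*x + p*b) with hD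
  have hq0 : (0:ℝ) < 1 - p := by linarith
  have hD0 : D 0 = 0 := by
    simp only [hD, hφ, mul_zero, zero_mul, Real.log_zero, neg_zero, sub_zero, add_zero,
      mul_one, zero_add]
    rw [Real.log_mul hp0.ne' hb.ne']
    ring
  have hDb : D b = 0 := by
    simp only [hD, hφ]
    rw [show (1-p)*b + p*b = b from by ring]
    ring
  have hφc : Continuous φ := Real.continuous_mul_log.neg
  have hcont : ContinuousOn D (Set.Icc 0 b) := by
    apply Continuous.continuousOn
    exact (((continuous_const.mul hφc).add continuous_const).add
        (continuous_const.mul (continuous_const.sub continuous_id))).sub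
        (hφc.comp ((continuous_const.mul continuous_id).add continuous_const))
  have hderiv : ∀ x ∈ Set.Ioo (0:ℝ) b, HasDerivAt D
      ((1-p) * (Real.log ((1-p)*x + p*b) - Real.log x) + p * Real.log p) x := by
    intro x hx
    have hx0 : x ≠ 0 := ne_of_gt hx.1
    have hy : (0:ℝ) < (1-p)*x + p*b := by
      have := hx.1
      positivity
    have h1 : HasDerivAt φ (-(Real.log x + 1)) x := (Real.hasDerivAt_mul_log hx0).neg
    have h2 : HasDerivAt (fun x : ℝ => (1-p)*x + p*b) (1-p) x := by
      simpa using ((hasDerivAt_id x).const_mul (1-p)).add_const (p*b)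
    have h3 : HasDerivAt (fun x : ℝ => φ ((1-p)*x + p*b))
        (-(Real.log ((1-p)*x + p*b) + 1) * (1-p)) x :=
      HasDerivAt.comp (h₂ := φ) (h := fun x : ℝ => (1-p)*x + p*b) x ((Real.hasDerivAt_mul_log hy.ne').fun_neg) h2
    have h4 : HasDerivAt (fun x : ℝ => b - x) (-1) x := by
      simpa using (hasDerivAt_id x).const_sub b
    have H : HasDerivAt D
        (((1-p) * (-(Real.log x + 1)) + p * (-Real.log p) * (-1))
          - (-(Real.log ((1-p)*x + p*b) + 1) * (1-p))) x := by
      exact (((h1.const_mul (1-p)).add_const (p * φ b)).add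
        (h4.const_mul (p * (-Real.log p)))).sub h3
    convert H using 1
    ring
  have hanti : AntitoneOn (deriv D) (interior (Set.Icc 0 b)) := by
    rw [interior_Icc]
    intro x hx y hy hxy
    rw [(hderiv x hx).deriv, (hderiv y hy).deriv]
    have hx0 := hx.1
    have hy0 := hy.1
    have hgx : (0:ℝ) < (1-p)*x + p*b := by positivity
    have hgy : (0:ℝ) < (1-p)*y + p*b := by positivity
    have key : Real.log ((1-p)*y + p*b) - Real.log y
        ≤ Real.log ((1-p)*x + p*b) - Real.log x := by
      rw [← Real.log_div hgy.ne' (ne_of_gt hy0), ← Real.log_div hgx.ne' (ne_of_gt hx0)]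
      apply Real.log_le_log (by positivity)
      rw [div_le_div_iff₀ hy0 hx0]
      nlinarith [mul_le_mul_of_nonneg_left hxy (mul_pos hp0 hb).le]
    nlinarith [mul_le_mul_of_nonneg_left key hq0.le]
  have hconc : ConcaveOn ℝ (Set.Icc 0 b) D := by
    apply AntitoneOn.concaveOn_of_deriv (convex_Icc 0 b) hcont
    · intro x hx
      rw [interior_Icc] at hx
      exact (hderiv x hx).differentiableAt.differentiableWithinAt
    · exact hanti
  have hDa : 0 ≤ D a := by
    have h0mem : (0:ℝ) ∈ Set.Icc (0:ℝ) b := ⟨le_rfl, hb.le⟩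
    have hbmem : b ∈ Set.Icc (0:ℝ) b := ⟨hb.le, le_rfl⟩
    have ht1 : (0:ℝ) ≤ 1 - a/b := by
      have : a/b ≤ 1 := (div_le_one hb).mpr hab
      linarith
    have ht2 : (0:ℝ) ≤ a/b := by positivity
    have := hconc.2 h0mem hbmem ht1 ht2 (by ring)
    rw [hD0, hDb] at this
    simpa [div_mul_cancel₀ _ hb.ne'] using this
  simp only [hD, hφ] at hDa
  linarith


theorem key (U : Finset α) : ∀ F : Finset (Finset α), F ⊆ U.powerset →
    (∀ A B : Finset α, B ∈ F → B ⊆ A → A ⊆ U → A ∈ F) →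
    ∀ p : ℝ, 0 < p → p < 1 →
    -(mu U F p * Real.log (mu U F p)) ≤ p * (-Real.log p) * deriv (mu U F) p := by
  induction U using Finset.induction_on with
  | empty =>
    intro F hFU _ p hp0 hp1
    rw [Finset.powerset_empty] at hFU
    rcases Finset.subset_singleton_iff.mp hFU with h | h
    · subst h
      have hmu : mu (∅ : Finset α) (∅ : Finset (Finset α)) = fun _ => 0 := by
        funext x; simp [mu]
      rw [hmu]
      simp
    · subst h
      have hmu : mu (∅ : Finset α) ({∅} : Finset (Finset α)) = fun _ => 1 := by
        funext x; simp [mu]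
      rw [hmu]
      simp
  | @insert a s ha IH =>
    intro F hFU hinc p hp0 hp1
    set F₀ := F.filter (fun A => a ∉ A) with hF₀def
    set F₁ := (F.filter (fun A => a ∈ A)).image (fun A => A.erase a) with hF₁def
    have hF₀U : F₀ ⊆ s.powerset := by
      intro A hA
      simp only [hF₀def, Finset.mem_filter] at hA
      exact Finset.mem_powerset.mpr
        ((Finset.subset_insert_iff_of_notMem hA.2).mp (Finset.mem_powerset.mp (hFU hA.1)))
    have hF₁U : F₁ ⊆ s.powerset := by
      intro B hB
      simp only [hF₁def, Finset.mem_image, Finset.mem_filter] at hB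
      obtain ⟨A, ⟨hAF, haA⟩, rfl⟩ := hB
      refine Finset.mem_powerset.mpr fun x hx => ?_
      have hx' := Finset.mem_erase.mp hx
      exact (Finset.mem_insert.mp (Finset.mem_powerset.mp (hFU hAF) hx'.2)).resolve_left hx'.1
    have hF₀inc : ∀ A B : Finset α, B ∈ F₀ → B ⊆ A → A ⊆ s → A ∈ F₀ := by
      intro A B hB hBA hAs
      simp only [hF₀def, Finset.mem_filter] at hB ⊢
      exact ⟨hinc A B hB.1 hBA (hAs.trans (Finset.subset_insert a s)),
        fun h => ha (hAs h)⟩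
    have hF₁inc : ∀ A B : Finset α, B ∈ F₁ → B ⊆ A → A ⊆ s → A ∈ F₁ := by
      intro A B hB hBA hAs
      simp only [hF₁def, Finset.mem_image, Finset.mem_filter] at hB ⊢
      obtain ⟨C, ⟨hCF, haC⟩, rfl⟩ := hB
      have hCA : C ⊆ insert a A := by
        intro x hxC
        rcases eq_or_ne x a with rfl | hxa
        · exact Finset.mem_insert_self x A
        · exact Finset.mem_insert_of_mem (hBA (Finset.mem_erase.mpr ⟨hxa, hxC⟩))
      refine ⟨insert a A, ⟨hinc (insert a A) C hCF hCA
        (Finset.insert_subset_insert a hAs), Finset.mem_insert_self a A⟩, ?_⟩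
      exact Finset.erase_insert (fun h => ha (hAs h))
    have hF₀₁ : F₀ ⊆ F₁ := by
      intro A hA
      simp only [hF₀def, Finset.mem_filter] at hA
      have hAs : A ⊆ s :=
        (Finset.subset_insert_iff_of_notMem hA.2).mp (Finset.mem_powerset.mp (hFU hA.1))
      simp only [hF₁def, Finset.mem_image, Finset.mem_filter]
      exact ⟨insert a A, ⟨hinc (insert a A) A hA.1 (Finset.subset_insert a A)
        (Finset.insert_subset_insert a hAs), Finset.mem_insert_self a A⟩,
        Finset.erase_insert hA.2⟩
    have hfun : mu (insert a s) F = fun x => (1-x) * mu s F₀ x + x * mu s F₁ x :=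
      funext fun x => mu_insert ha hFU x
    have hd : deriv (mu (insert a s) F) p
        = ((1-p) * deriv (mu s F₀) p - mu s F₀ p) + (p * deriv (mu s F₁) p + mu s F₁ p) := by
      rw [hfun, deriv_combo _ _ (mu_differentiable s F₀) (mu_differentiable s F₁)]
    have hval : mu (insert a s) F p = (1-p) * mu s F₀ p + p * mu s F₁ p := mu_insert ha hFU p
    have IH0 := IH F₀ hF₀U hF₀inc p hp0 hp1
    have IH1 := IH F₁ hF₁U hF₁inc p hp0 hp1
    have hA0 : 0 ≤ mu s F₀ p := mu_nonneg s F₀ hp0.le hp1.le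
    have hAB : mu s F₀ p ≤ mu s F₁ p := mu_mono s hF₀₁ hp0.le hp1.le
    have hR := lemmaR hp0 hp1 hA0 hAB
    rw [hval, hd]
    have h0' := mul_le_mul_of_nonneg_left IH0 (by linarith : (0:ℝ) ≤ 1 - p)
    have h1' := mul_le_mul_of_nonneg_left IH1 hp0.le
    nlinarith [h0', h1', hR]


end LogBiasedAux

open LogBiasedAux

/-- For an increasing family F (nonempty and proper), p ↦ log_p(μ_p(F)) is
monotone non-increasing on (0,1). -/
theorem log_biased_measure_antitone (n : ℕ) (F : Finset (Finset (Fin n)))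
    (hinc : ∀ A B : Finset (Fin n), B ∈ F → B ⊆ A → A ∈ F)
    (hne : F.Nonempty) (hproper : F ≠ Finset.univ) :
    AntitoneOn (fun p => Real.log (biasedMeasure p n F) / Real.log p)
      (Set.Ioo (0 : ℝ) 1) := by
  have hbm : ∀ p : ℝ, biasedMeasure p n F = mu Finset.univ F p := by
    intro p
    simp [biasedMeasure, mu, Finset.card_univ]
  have hpos : ∀ p : ℝ, 0 < p → p < 1 → 0 < mu (Finset.univ : Finset (Fin n)) F p := by
    intro p hp0 hp1
    obtain ⟨A₀, hA₀⟩ := hne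
    have h1 : (0:ℝ) < 1 - p := by linarith
    have hterm : (0:ℝ) < p ^ A₀.card * (1-p) ^ ((Finset.univ : Finset (Fin n)).card - A₀.card) := by
      positivity
    refine lt_of_lt_of_le hterm ?_
    have : ∀ A ∈ F, (0:ℝ) ≤ p ^ A.card * (1-p) ^ ((Finset.univ : Finset (Fin n)).card - A.card) := by
      intro A _
      positivity
    exact Finset.single_le_sum this hA₀
  have hkey := key (Finset.univ : Finset (Fin n)) F
    (fun A _ => Finset.mem_powerset.mpr (Finset.subset_univ A))
    (fun A B hB hBA _ => hinc A B hB hBA)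
  have hg : ∀ p ∈ Set.Ioo (0:ℝ) 1,
      HasDerivAt (fun p => Real.log (biasedMeasure p n F) / Real.log p)
      ((deriv (mu Finset.univ F) p / mu Finset.univ F p * Real.log p
        - Real.log (mu Finset.univ F p) * p⁻¹) / Real.log p ^ 2) p := by
    intro p hp
    have hm := ((mu_differentiable (Finset.univ : Finset (Fin n)) F) p).hasDerivAt
    have hN : HasDerivAt (fun x => Real.log (mu (Finset.univ : Finset (Fin n)) F x))
        (deriv (mu Finset.univ F) p / mu Finset.univ F p) p :=
      hm.log (hpos p hp.1 hp.2).ne'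
    have hlog : HasDerivAt Real.log p⁻¹ p := Real.hasDerivAt_log (ne_of_gt hp.1)
    have hlogne : Real.log p ≠ 0 := ne_of_lt (Real.log_neg hp.1 hp.2)
    have := hN.fun_div hlog hlogne
    simpa only [hbm] using this
  apply antitoneOn_of_deriv_nonpos (convex_Ioo 0 1)
  · intro p hp
    exact (hg p hp).continuousAt.continuousWithinAt
  · intro p hp
    rw [interior_Ioo] at hp
    exact (hg p hp).differentiableAt.differentiableWithinAt
  · intro p hp
    rw [interior_Ioo] at hp
    rw [(hg p hp).deriv]
    apply div_nonpos_of_nonpos_of_nonneg _ (sq_nonneg _)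
    have hm0 := hpos p hp.1 hp.2
    have hkeyp := hkey p hp.1 hp.2
    rw [sub_nonpos, div_mul_eq_mul_div, ← div_eq_mul_inv,
      div_le_div_iff₀ hm0 hp.1]
    nlinarith [hkeyp]
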